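/- If χ : G → ℝ lies in the topological closure (in ℝ^G with the product/sup topology) of the set X of Gaussian pushforwards on a finite abelian group G, and χ(0) > 0, then for all g₁, g₂ ∈ G: χ(g₁)·χ(g₂)/χ(0) ≤ (χ(g₁ + g₂) + χ(g₁ − g₂))/2. -/

import Mathlib

open scoped RealInnerProductSpace
open Real

namespace GPaux

variable {V : Type} [NormedAddCommGroup V] [InnerProductSpace ℝ V]

noncomputable def gg (x : V) : ℝ := Real.exp (-(π / 2) * ⟪x, x⟫)

lemma gg_pos (x : V) : 0 < gg x := Real.exp_pos _

lemma gg_neg (x : V) : gg (-x) = gg x := by simp [gg]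

lemma f_mul_f (x y : V) :
    Real.exp (-π * ⟪x, x⟫) * Real.exp (-π * ⟪y, y⟫) = gg (x + y) * gg (x - y) := by
  rw [gg, gg, ← Real.exp_add, ← Real.exp_add]
  congr 1
  have h1 : ⟪x + y, x + y⟫ = ⟪x, x⟫ + 2 * ⟪x, y⟫ + ⟪y, y⟫ := real_inner_add_add_self x y
  have h2 : ⟪x - y, x - y⟫ = ⟪x, x⟫ - 2 * ⟪x, y⟫ + ⟪y, y⟫ := real_inner_sub_sub_self x y
  rw [h1, h2]; ring

def twoSub (Γ : Type) [AddCommGroup Γ] : AddSubgroup Γ where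
  carrier := {x | ∃ m, m + m = x}
  zero_mem' := ⟨0, by simp⟩
  add_mem' := by rintro a b ⟨m, rfl⟩ ⟨n, rfl⟩; exact ⟨m + n, by abel⟩
  neg_mem' := by rintro a ⟨m, rfl⟩; exact ⟨-m, by abel⟩

abbrev EE (Γ : Type) [AddCommGroup Γ] : Type := {x : Γ × Γ // x.1 - x.2 ∈ twoSub Γ}

def sigmaEquiv (Γ : Type) [AddCommGroup Γ] :
    (Σ c : Γ ⧸ twoSub Γ, {p : Γ // (p : Γ ⧸ twoSub Γ) = c} × {q : Γ // (q : Γ ⧸ twoSub Γ) = c})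
      ≃ EE Γ where
  toFun s := ⟨(s.2.1.1, s.2.2.1), by
    have h1 : (s.2.1.1 : Γ ⧸ twoSub Γ) = s.2.2.1 := s.2.1.2.trans s.2.2.2.symm
    exact (QuotientAddGroup.eq_iff_sub_mem).mp h1⟩
  invFun x := ⟨(x.1.1 : Γ ⧸ twoSub Γ), ⟨⟨x.1.1, rfl⟩,
    ⟨x.1.2, ((QuotientAddGroup.eq_iff_sub_mem).mpr x.2).symm⟩⟩⟩
  left_inv s := by
    rcases s with ⟨c, ⟨p, hp⟩, ⟨q, hq⟩⟩
    subst hp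
    rfl
  right_inv x := rfl


abbrev Fib (Γ : Type) [AddCommGroup Γ] (c : Γ ⧸ twoSub Γ) : Type :=
  {p : Γ // (p : Γ ⧸ twoSub Γ) = c}

set_option maxHeartbeats 1000000 in
lemma trans_sigma {Γ : Type} [AddCommGroup Γ] (δ η : Γ → ℝ) {P : ℝ}
    (hP : HasSum (fun x : EE Γ => δ x.1.1 * η x.1.2) P) :
    HasSum (fun s : Σ c : Γ ⧸ twoSub Γ, Fib Γ c × Fib Γ c => δ s.2.1.1 * η s.2.2.1) P := by
  have h := (Equiv.hasSum_iff (sigmaEquiv Γ) (f := fun x : EE Γ => δ x.1.1 * η x.1.2) (a := P)).mpr hP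
  exact h

set_option maxHeartbeats 1000000 in
lemma fiber_summable {Γ : Type} [AddCommGroup Γ] (δ : Γ → ℝ) (hpos : ∀ p, 0 < δ p) {P : ℝ}
    (hs : HasSum (fun e : EE Γ => δ e.1.1 * δ e.1.2) P) (c : Γ ⧸ twoSub Γ) :
    Summable (fun p : Fib Γ c => δ p.1) := by
  by_cases hne : Nonempty (Fib Γ c)
  case neg =>
    haveI : IsEmpty (Fib Γ c) := not_nonempty_iff.mp hne
    exact summable_empty
  obtain ⟨q₀⟩ := hne
  have hblock : Summable (fun pq : Fib Γ c × Fib Γ c => δ pq.1.1 * δ pq.2.1) :=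
    (trans_sigma δ δ hs).summable.sigma_factor c
  have inj : Function.Injective (fun p : Fib Γ c => ((p, q₀) : Fib Γ c × Fib Γ c)) :=
    fun a b hab => (Prod.ext_iff.mp hab).1
  have h1 : Summable (fun p : Fib Γ c => δ p.1 * δ q₀.1) := hblock.comp_injective inj
  have h2 := h1.mul_right (δ q₀.1)⁻¹
  have h3 : (fun p : Fib Γ c => δ p.1 * δ q₀.1 * (δ q₀.1)⁻¹) = fun p : Fib Γ c => δ p.1 := by
    funext p
    rw [mul_assoc, mul_inv_cancel₀ (hpos q₀.1).ne', mul_one]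
  rwa [h3] at h2

set_option maxHeartbeats 1000000 in
lemma pos_part {Γ : Type} [AddCommGroup Γ] (α β : Γ → ℝ)
    (hαpos : ∀ p, 0 < α p) (hβpos : ∀ p, 0 < β p)
    {Pαα Pββ Pαβ Pβα : ℝ}
    (hαα : HasSum (fun e : EE Γ => α e.1.1 * α e.1.2) Pαα)
    (hββ : HasSum (fun e : EE Γ => β e.1.1 * β e.1.2) Pββ)
    (hαβ : HasSum (fun e : EE Γ => α e.1.1 * β e.1.2) Pαβ)
    (hβα : HasSum (fun e : EE Γ => β e.1.1 * α e.1.2) Pβα) :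
    Pαβ + Pβα ≤ Pαα + Pββ := by
  classical
  have hT : HasSum (fun e : EE Γ => (α e.1.1 - β e.1.1) * (α e.1.2 - β e.1.2))
      (Pαα + Pββ - (Pαβ + Pβα)) := by
    have h := (hαα.add hββ).sub (hαβ.add hβα)
    rw [show (fun e : EE Γ => (α e.1.1 - β e.1.1) * (α e.1.2 - β e.1.2)) = fun e : EE Γ =>
      α e.1.1 * α e.1.2 + β e.1.1 * β e.1.2 - (α e.1.1 * β e.1.2 + β e.1.1 * α e.1.2) from
      funext fun e => by ring]
    exact h
  suffices h : 0 ≤ Pαα + Pββ - (Pαβ + Pβα) by linarith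
  have hTs := trans_sigma (fun p => α p - β p) (fun p => α p - β p) hT
  rw [← hTs.tsum_eq, hTs.summable.tsum_sigma]
  refine tsum_nonneg fun c => ?_
  have hγc : Summable (fun p : Fib Γ c => α p.1 - β p.1) :=
    (fiber_summable α hαpos hαα c).sub (fiber_summable β hβpos hββ c)
  have hblockγ : Summable (fun pq : Fib Γ c × Fib Γ c =>
      (α pq.1.1 - β pq.1.1) * (α pq.2.1 - β pq.2.1)) :=
    hTs.summable.sigma_factor c
  have key : (∑' p : Fib Γ c, (α p.1 - β p.1)) * (∑' q : Fib Γ c, (α q.1 - β q.1))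
      = ∑' pq : Fib Γ c × Fib Γ c, (α pq.1.1 - β pq.1.1) * (α pq.2.1 - β pq.2.1) :=
    hγc.hasSum.mul_eq hγc.hasSum hblockγ.hasSum
  calc (0:ℝ) ≤ (∑' p : Fib Γ c, (α p.1 - β p.1)) * (∑' p : Fib Γ c, (α p.1 - β p.1)) :=
        mul_self_nonneg _
  _ = ∑' pq : Fib Γ c × Fib Γ c, (α pq.1.1 - β pq.1.1) * (α pq.2.1 - β pq.2.1) := key
  _ = _ := rfl

lemma two_cancel {V : Type} [NormedAddCommGroup V] [InnerProductSpace ℝ V]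
    {Γ : Type} [AddCommGroup Γ] (ι : Γ →+ V) (hι : Function.Injective ι)
    {a b : Γ} (h : a + a = b + b) : a = b := by
  apply hι
  have h2 : (2 : ℝ) • ι a = (2 : ℝ) • ι b := by
    rw [two_smul, two_smul, ← map_add, ← map_add, h]
  exact smul_right_injective V two_ne_zero h2

noncomputable def phiE (Γ : Type) [AddCommGroup Γ]
    (htf : ∀ a b : Γ, a + a = b + b → a = b) : Γ × Γ ≃ EE Γ :=
  Equiv.ofBijective (fun kl => ⟨(kl.1 + kl.2, kl.1 - kl.2), ⟨kl.2, by show kl.2 + kl.2 = (kl.1 + kl.2) - (kl.1 - kl.2); abel⟩⟩) <| by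
    constructor
    · rintro ⟨k, l⟩ ⟨k', l'⟩ hkl
      have h1 : k + l = k' + l' := congrArg (fun x => x.1.1) hkl
      have h2 : k - l = k' - l' := congrArg (fun x => x.1.2) hkl
      have h3 : k + k = k' + k' := by
        calc k + k = (k + l) + (k - l) := by abel
        _ = (k' + l') + (k' - l') := by rw [h1, h2]
        _ = k' + k' := by abel
      have hk : k = k' := htf _ _ h3
      have hl : l = l' := by
        rw [hk] at h1
        exact add_left_cancel h1
      rw [hk, hl]
    · rintro ⟨⟨p, q⟩, ⟨m, hm⟩⟩
      refine ⟨(q + m, m), Subtype.ext (Prod.ext_iff.mpr ⟨?_, ?_⟩)⟩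
      · show q + m + m = p
        rw [add_assoc, hm]
        abel
      · show q + m - m = q
        abel

noncomputable def psiE (Γ : Type) [AddCommGroup Γ]
    (htf : ∀ a b : Γ, a + a = b + b → a = b) : Γ × Γ ≃ EE Γ :=
  Equiv.ofBijective (fun kl => ⟨(kl.1 + kl.2, kl.2 - kl.1), ⟨kl.1, by show kl.1 + kl.1 = (kl.1 + kl.2) - (kl.2 - kl.1); abel⟩⟩) <| by
    constructor
    · rintro ⟨k, l⟩ ⟨k', l'⟩ hkl
      have h1 : k + l = k' + l' := congrArg (fun x => x.1.1) hkl
      have h2 : l - k = l' - k' := congrArg (fun x => x.1.2) hkl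
      have h3 : l + l = l' + l' := by
        calc l + l = (k + l) + (l - k) := by abel
        _ = (k' + l') + (l' - k') := by rw [h1, h2]
        _ = l' + l' := by abel
      have hl : l = l' := htf _ _ h3
      have hk : k = k' := by
        rw [hl] at h1
        exact add_right_cancel h1
      rw [hk, hl]
    · rintro ⟨⟨p, q⟩, ⟨m, hm⟩⟩
      refine ⟨(m, p - m), Subtype.ext (Prod.ext_iff.mpr ⟨?_, ?_⟩)⟩
      · show m + (p - m) = p
        abel
      · show p - m - m = q
        calc p - m - m = p - (m + m) := by abel
        _ = p - (p - q) := by rw [hm]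
        _ = q := by abel

def swapE (Γ : Type) [AddCommGroup Γ] : EE Γ ≃ EE Γ where
  toFun x := ⟨(x.1.2, x.1.1), by
    obtain ⟨m, hm⟩ := x.2
    exact ⟨-m, by rw [← neg_add, hm]; abel⟩⟩
  invFun x := ⟨(x.1.2, x.1.1), by
    obtain ⟨m, hm⟩ := x.2
    exact ⟨-m, by rw [← neg_add, hm]; abel⟩⟩
  left_inv x := rfl
  right_inv x := rfl

set_option maxHeartbeats 2000000 in
lemma core {V : Type} [NormedAddCommGroup V] [InnerProductSpace ℝ V]
    {Γ : Type} [AddCommGroup Γ] (ι : Γ →+ V) (hι : Function.Injective ι)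
    (u v : V) {A B C S D : ℝ}
    (hA : HasSum (fun k : Γ => Real.exp (-π * ⟪ι k + u, ι k + u⟫)) A)
    (hB : HasSum (fun k : Γ => Real.exp (-π * ⟪ι k + v, ι k + v⟫)) B)
    (hC : HasSum (fun k : Γ => Real.exp (-π * ⟪ι k, ι k⟫)) C)
    (hS : HasSum (fun k : Γ => Real.exp (-π * ⟪ι k + (u + v), ι k + (u + v)⟫)) S)
    (hD : HasSum (fun k : Γ => Real.exp (-π * ⟪ι k + (u - v), ι k + (u - v)⟫)) D) :
    A * B * 2 ≤ C * (S + D) := by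
  have htf : ∀ a b : Γ, a + a = b + b → a = b := fun a b h => two_cancel ι hι h
  have expn : ∀ x : V, (0:ℝ) ≤ Real.exp (-π * ⟪x, x⟫) := fun x => (Real.exp_pos _).le
  -- product sums over Γ × Γ
  have hABp : HasSum (fun kl : Γ × Γ =>
      Real.exp (-π * ⟪ι kl.1 + u, ι kl.1 + u⟫) * Real.exp (-π * ⟪ι kl.2 + v, ι kl.2 + v⟫))
      (A * B) :=
    hA.mul hB (hA.summable.mul_of_nonneg hB.summable (fun _ => expn _) (fun _ => expn _))
  have hCSp : HasSum (fun kl : Γ × Γ =>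
      Real.exp (-π * ⟪ι kl.1, ι kl.1⟫) *
        Real.exp (-π * ⟪ι kl.2 + (u + v), ι kl.2 + (u + v)⟫)) (C * S) :=
    hC.mul hS (hC.summable.mul_of_nonneg hS.summable (fun _ => expn _) (fun _ => expn _))
  have hCDp : HasSum (fun kl : Γ × Γ =>
      Real.exp (-π * ⟪ι kl.1, ι kl.1⟫) *
        Real.exp (-π * ⟪ι kl.2 + (u - v), ι kl.2 + (u - v)⟫)) (C * D) :=
    hC.mul hD (hC.summable.mul_of_nonneg hD.summable (fun _ => expn _) (fun _ => expn _))
  -- transport to EE Γ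
  have hαβ : HasSum (fun e : EE Γ => gg (ι e.1.1 + (u + v)) * gg (ι e.1.2 + (u - v)))
      (A * B) := by
    rw [← Equiv.hasSum_iff (phiE Γ htf)]
    convert hABp using 1
    funext kl
    simp only [Function.comp_apply, phiE, Equiv.ofBijective_apply]
    rw [f_mul_f]
    have e1 : (ι kl.1 + u) + (ι kl.2 + v) = ι (kl.1 + kl.2) + (u + v) := by
      rw [map_add]; abel
    have e2 : (ι kl.1 + u) - (ι kl.2 + v) = ι (kl.1 - kl.2) + (u - v) := by
      rw [map_sub]; abel
    rw [e1, e2]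
    rfl
  have hβα : HasSum (fun e : EE Γ => gg (ι e.1.1 + (u - v)) * gg (ι e.1.2 + (u + v)))
      (A * B) := by
    rw [← Equiv.hasSum_iff (swapE Γ)]
    convert hαβ using 1
    funext e
    simp only [Function.comp_apply, swapE, Equiv.coe_fn_mk]
    rw [mul_comm]
  have hαα : HasSum (fun e : EE Γ => gg (ι e.1.1 + (u + v)) * gg (ι e.1.2 + (u + v)))
      (C * S) := by
    rw [← Equiv.hasSum_iff (psiE Γ htf)]
    convert hCSp using 1
    funext kl
    simp only [Function.comp_apply, psiE, Equiv.ofBijective_apply]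
    rw [f_mul_f]
    have e1 : ι kl.1 + (ι kl.2 + (u + v)) = ι (kl.1 + kl.2) + (u + v) := by
      rw [map_add]; abel
    have e2 : ι kl.1 - (ι kl.2 + (u + v)) = -(ι (kl.2 - kl.1) + (u + v)) := by
      rw [map_sub]; abel
    rw [e1, e2, gg_neg]
    rfl
  have hββ : HasSum (fun e : EE Γ => gg (ι e.1.1 + (u - v)) * gg (ι e.1.2 + (u - v)))
      (C * D) := by
    rw [← Equiv.hasSum_iff (psiE Γ htf)]
    convert hCDp using 1
    funext kl
    simp only [Function.comp_apply, psiE, Equiv.ofBijective_apply]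
    rw [f_mul_f]
    have e1 : ι kl.1 + (ι kl.2 + (u - v)) = ι (kl.1 + kl.2) + (u - v) := by
      rw [map_add]; abel
    have e2 : ι kl.1 - (ι kl.2 + (u - v)) = -(ι (kl.2 - kl.1) + (u - v)) := by
      rw [map_sub]; abel
    rw [e1, e2, gg_neg]
    rfl
  have main := pos_part (fun p : Γ => gg (ι p + (u + v))) (fun p : Γ => gg (ι p + (u - v)))
    (fun p => gg_pos _) (fun p => gg_pos _) hαα hββ hαβ hβα
  have hring : C * (S + D) = C * S + C * D := by ring
  linarith

end GPaux

/-- A function `χ : G → ℝ` on a finite abelian group is a *Gaussian pushforward* if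
there is a lattice `L` (a discrete additive subgroup of a finite-dimensional real inner
product space) and a group homomorphism `h : L →+ G` such that for every `g`,
`χ g` is the (absolutely convergent) sum of `ρ x = exp (−π ⟨x, x⟩)` over `h ⁻¹ g`. -/
def IsGaussianPushforward {G : Type} [AddCommGroup G] (χ : G → ℝ) : Prop :=
  ∃ (V : Type) (iN : NormedAddCommGroup V),
    letI := iN
    ∃ (iI : InnerProductSpace ℝ V),
      letI := iI
      FiniteDimensional ℝ V ∧
      ∃ (L : AddSubgroup V) (h : L →+ G),
        DiscreteTopology L ∧
        ∀ g : G, HasSum (fun x : {x : L // h x = g} =>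
          Real.exp (-Real.pi * ⟪((x : L) : V), ((x : L) : V)⟫)) (χ g)

namespace GPaux

def fiberEquiv {V G : Type} [NormedAddCommGroup V] [AddCommGroup G] {L : AddSubgroup V}
    (h : ↥L →+ G) (x₀ : ↥L) {g : G} (hg : h x₀ = g) :
    h.ker ≃ {x : ↥L // h x = g} where
  toFun k := ⟨k.1 + x₀, by rw [map_add, AddMonoidHom.mem_ker.mp k.2, hg, zero_add]⟩
  invFun x := ⟨x.1 - x₀, AddMonoidHom.mem_ker.mpr (by rw [map_sub, x.2, hg, sub_self])⟩
  left_inv k := Subtype.ext (add_sub_cancel_right _ _)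
  right_inv x := Subtype.ext (sub_add_cancel _ _)

set_option maxHeartbeats 2000000 in
lemma gp_ineq {G : Type} [AddCommGroup G] {χ : G → ℝ} (hgp : IsGaussianPushforward χ)
    (g₁ g₂ : G) :
    χ g₁ * χ g₂ * 2 ≤ χ 0 * (χ (g₁ + g₂) + χ (g₁ - g₂)) := by
  obtain ⟨V, iN, iI, hfd, L, h, hdisc, hsum⟩ := hgp
  have hnonneg : ∀ g : G, 0 ≤ χ g := fun g => by
    rw [← (hsum g).tsum_eq]
    exact tsum_nonneg fun _ => (Real.exp_pos _).le
  by_cases h1 : ∃ x : L, h x = g₁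
  case neg =>
    have hz : χ g₁ = 0 := by
      haveI : IsEmpty {x : L // h x = g₁} := ⟨fun x => h1 ⟨x.1, x.2⟩⟩
      exact (hsum g₁).unique hasSum_empty
    rw [hz, zero_mul, zero_mul]
    exact mul_nonneg (hnonneg 0) (add_nonneg (hnonneg (g₁ + g₂)) (hnonneg (g₁ - g₂)))
  by_cases h2 : ∃ x : L, h x = g₂
  case neg =>
    have hz : χ g₂ = 0 := by
      haveI : IsEmpty {x : L // h x = g₂} := ⟨fun x => h2 ⟨x.1, x.2⟩⟩
      exact (hsum g₂).unique hasSum_empty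
    rw [hz, mul_zero, zero_mul]
    exact mul_nonneg (hnonneg 0) (add_nonneg (hnonneg (g₁ + g₂)) (hnonneg (g₁ - g₂)))
  obtain ⟨x₁, hx₁⟩ := h1
  obtain ⟨x₂, hx₂⟩ := h2
  set ι : h.ker →+ V := L.subtype.comp h.ker.subtype with hιdef
  have hι : Function.Injective ι := by
    rw [hιdef, AddMonoidHom.coe_comp]
    exact (AddSubgroup.subtype_injective L).comp (AddSubgroup.subtype_injective h.ker)
  have fib : ∀ (x₀ : L) (g : G), h x₀ = g →
      HasSum (fun k : h.ker => Real.exp (-π * ⟪ι k + (x₀ : V), ι k + (x₀ : V)⟫)) (χ g) := by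
    intro x₀ g hg
    have e : h.ker ≃ {x : L // h x = g} := fiberEquiv h x₀ hg
    have h0 := (Equiv.hasSum_iff (fiberEquiv h x₀ hg) (f := fun x : {x : L // h x = g} =>
      Real.exp (-Real.pi * ⟪((x : L) : V), ((x : L) : V)⟫)) (a := χ g)).mpr (hsum g)
    convert h0 using 1
    rfl
  have hA := fib x₁ g₁ hx₁
  have hB := fib x₂ g₂ hx₂
  have hC : HasSum (fun k : h.ker => Real.exp (-π * ⟪ι k, ι k⟫)) (χ 0) := by
    have h0 := fib 0 0 (map_zero h)
    simpa using h0
  have hS : HasSum (fun k : h.ker =>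
      Real.exp (-π * ⟪ι k + ((x₁ : V) + (x₂ : V)), ι k + ((x₁ : V) + (x₂ : V))⟫))
      (χ (g₁ + g₂)) := by
    have h0 := fib (x₁ + x₂) (g₁ + g₂) (by rw [map_add, hx₁, hx₂])
    convert h0 using 3
    rfl
  have hD : HasSum (fun k : h.ker =>
      Real.exp (-π * ⟪ι k + ((x₁ : V) - (x₂ : V)), ι k + ((x₁ : V) - (x₂ : V))⟫))
      (χ (g₁ - g₂)) := by
    have h0 := fib (x₁ - x₂) (g₁ - g₂) (by rw [map_sub, hx₁, hx₂])
    convert h0 using 3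
    rfl
  exact core ι hι (x₁ : V) (x₂ : V) hA hB hC hS hD

end GPaux

/-- Any `χ` in the topological closure of the set of Gaussian pushforwards on a finite
abelian group (in `G → ℝ` with the product topology), with `χ 0 > 0`, satisfies
`χ g₁ · χ g₂ / χ 0 ≤ (χ (g₁ + g₂) + χ (g₁ − g₂)) / 2`. -/
theorem closure_gaussianPushforward_ineq
    {G : Type} [AddCommGroup G] {χ : G → ℝ}
    (hχ : χ ∈ closure {f : G → ℝ | IsGaussianPushforward f})
    (hχ0 : 0 < χ 0) (g₁ g₂ : G) :
    χ g₁ * χ g₂ / χ 0 ≤ (χ (g₁ + g₂) + χ (g₁ - g₂)) / 2 := by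
  have hsub : {f : G → ℝ | IsGaussianPushforward f} ⊆
      {f : G → ℝ | f g₁ * f g₂ * 2 ≤ f 0 * (f (g₁ + g₂) + f (g₁ - g₂))} :=
    fun f hf => GPaux.gp_ineq hf g₁ g₂
  have hclosed : IsClosed {f : G → ℝ | f g₁ * f g₂ * 2 ≤ f 0 * (f (g₁ + g₂) + f (g₁ - g₂))} := by
    apply isClosed_le
    · exact ((continuous_apply g₁).mul (continuous_apply g₂)).mul continuous_const
    · exact (continuous_apply 0).mul ((continuous_apply (g₁ + g₂)).add (continuous_apply (g₁ - g₂)))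
  have hmem : χ g₁ * χ g₂ * 2 ≤ χ 0 * (χ (g₁ + g₂) + χ (g₁ - g₂)) :=
    closure_minimal hsub hclosed hχ
  rw [div_le_div_iff₀ hχ0 (by norm_num : (0:ℝ) < 2)]
  nlinarith [hmem]
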